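/- (DCA sublinear rate with optimal value, regime p1.) Let f1 ∈ F_{μ1,L1} and f2 ∈ F_{μ2,L2} with L1 ≥ L2 > μ1 ≥ 0, μ2 < L2 and L1 > μ2, and assume either μ2 ≥ 0, or μ1 > −μ2 > 0 together with 1/μ1 + 1/μ2 + 1/L2 ≤ (1/L1)·(2 + L2/μ2). Let F := f1 − f2 be bounded below with F* := inf F finite. Let N ≥ 1 and let x⁰, …, x^N be a DCA sequence with subgradients g1^k ∈ ∂f1(x^k), g2^k ∈ ∂f2(x^k). Then (1/2)·min_{0 ≤ k ≤ N} ‖g1^k − g2^k‖² ≤ (F(x⁰) − F*) / (p·N + 1/(L1 − μ2)), where p = (L2 − μ1)/(L2(L1 − μ1)) + (1/L2)·(1 + μ1(L1 − L2)/(L2(L1 − μ1))). -/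

import Mathlib

set_option maxHeartbeats 1600000

open RealInnerProductSpace

variable {H : Type*} [NormedAddCommGroup H] [InnerProductSpace ℝ H]

/-- `f` has lower curvature `μ`, i.e. `f - (μ/2)‖·‖²` is convex. -/
def HasLowerCurvature (μ : ℝ) (f : H → ℝ) : Prop :=
  ConvexOn ℝ Set.univ fun x => f x - μ / 2 * ‖x‖ ^ 2

/-- `f` has upper curvature `L`, i.e. `(L/2)‖·‖² - f` is convex. -/
def HasUpperCurvature (L : ℝ) (f : H → ℝ) : Prop :=
  ConvexOn ℝ Set.univ fun x => L / 2 * ‖x‖ ^ 2 - f x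

/-- `g` is a subgradient of `f` (of lower curvature `μ`) at `x`. -/
def IsSubgradient (μ : ℝ) (f : H → ℝ) (x g : H) : Prop :=
  ∀ y, f y ≥ f x + ⟪g, y - x⟫ + μ / 2 * ‖y - x‖ ^ 2

lemma three_point {φ : H → ℝ} (hφ : ConvexOn ℝ Set.univ φ) (x v : H) {s : ℝ} (hs : 0 < s) :
    (1 + s) * φ x - s * φ (x - s⁻¹ • v) ≤ φ (x + v) := by
  have h1s : (0:ℝ) < 1 + s := by linarith
  have ha : (0:ℝ) ≤ 1/(1+s) := by positivity
  have hb : (0:ℝ) ≤ s/(1+s) := by positivity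
  have hab : 1/(1+s) + s/(1+s) = 1 := by field_simp
  have hcomb : (1/(1+s)) • (x + v) + (s/(1+s)) • (x - s⁻¹ • v) = x := by
    match_scalars <;> field_simp <;> ring
  have h := hφ.2 (Set.mem_univ (x + v)) (Set.mem_univ (x - s⁻¹ • v)) ha hb hab
  rw [hcomb, smul_eq_mul, smul_eq_mul] at h
  have h2 := mul_le_mul_of_nonneg_left h h1s.le
  have h3 : (1+s) * (1/(1+s) * φ (x + v) + s/(1+s) * φ (x - s⁻¹ • v))
      = φ (x+v) + s * φ (x - s⁻¹ • v) := by field_simp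
  rw [h3] at h2
  linarith

lemma descent_lemma {L c : ℝ} {f : H → ℝ} (hup : HasUpperCurvature L f) {x g : H}
    (hsub : ∀ y, f x + ⟪g, y - x⟫ + c * ‖y - x‖ ^ 2 ≤ f y) (z : H) :
    f z ≤ f x + ⟪g, z - x⟫ + L / 2 * ‖z - x‖ ^ 2 := by
  set v := z - x with hv
  have main : ∀ s : ℝ, 0 < s →
      f z ≤ f x + ⟪g, v⟫ + L/2 * ‖v‖^2 + ((L/2 - c) * ‖v‖^2) * s⁻¹ := by
    intro s hs
    have h3 := three_point hup x v hs
    have hx : x + v = z := by rw [hv]; abel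
    rw [hx] at h3
    have h4 := hsub (x - s⁻¹ • v)
    have he : (x - s⁻¹ • v) - x = -(s⁻¹ • v) := by abel
    rw [he] at h4
    have e1 : ⟪g, -(s⁻¹ • v)⟫ = -(s⁻¹ * ⟪g, v⟫) := by
      rw [inner_neg_right, real_inner_smul_right]
    have e2 : ‖-(s⁻¹ • v)‖^2 = s⁻¹^2 * ‖v‖^2 := by
      rw [norm_neg, norm_smul, mul_pow, Real.norm_eq_abs, sq_abs]
    rw [e1, e2] at h4
    have e3 : ‖x - s⁻¹ • v‖^2 = ‖x‖^2 - 2*(s⁻¹ * ⟪x, v⟫) + s⁻¹^2 * ‖v‖^2 := by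
      rw [norm_sub_sq_real, real_inner_smul_right, norm_smul, mul_pow, Real.norm_eq_abs, sq_abs]
    have e4 : ‖z‖^2 = ‖x‖^2 + 2*⟪x,v⟫ + ‖v‖^2 := by rw [← hx, norm_add_sq_real]
    rw [e3, e4] at h3
    have h4s := mul_le_mul_of_nonneg_left h4 hs.le
    have hss : s * s⁻¹ = 1 := mul_inv_cancel₀ hs.ne'
    have e5 : s * (f x + -(s⁻¹ * ⟪g, v⟫) + c * (s⁻¹^2 * ‖v‖^2))
        = s * f x - ⟪g,v⟫ + c * (s⁻¹ * ‖v‖^2) := by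
      field_simp
      ring
    rw [e5] at h4s
    have e6 : (1+s) * (L/2*‖x‖^2 - f x)
        - s * (L/2*(‖x‖^2 - 2*(s⁻¹ * ⟪x, v⟫) + s⁻¹^2 * ‖v‖^2) - f (x - s⁻¹ • v))
        = L/2*‖x‖^2 - f x - s * f x + L*⟪x,v⟫ - L/2*(s⁻¹*‖v‖^2) + s * f (x - s⁻¹ • v) := by
      field_simp
      ring
    rw [e6] at h3
    have : ((L/2 - c) * ‖v‖^2) * s⁻¹ = L/2*(s⁻¹*‖v‖^2) - c*(s⁻¹*‖v‖^2) := by ring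
    rw [this]
    linarith
  have key : ∀ ε : ℝ, 0 < ε → f z ≤ (f x + ⟪g, v⟫ + L/2 * ‖v‖^2) + ε := by
    intro ε hε
    set K := (L/2 - c) * ‖v‖^2 with hK
    set s := max 1 (K/ε) with hsdef
    have hs : 0 < s := lt_of_lt_of_le one_pos (le_max_left _ _)
    have hb := main s hs
    have hKs : K * s⁻¹ ≤ ε := by
      rcases le_or_gt K 0 with hK0 | hK0
      · have : K * s⁻¹ ≤ 0 := mul_nonpos_of_nonpos_of_nonneg hK0 (inv_nonneg.2 hs.le)
        linarith
      · have h1 : K/ε ≤ s := le_max_right _ _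
        rw [div_le_iff₀ hε] at h1
        rw [mul_inv_le_iff₀ hs]
        nlinarith
    linarith
  have := le_of_forall_pos_le_add key
  linarith [this]

lemma interp_lemma {μ L : ℝ} (hμL : μ < L) {f : H → ℝ} (hup : HasUpperCurvature L f)
    {x y gx gy : H} (hx : IsSubgradient μ f x gx) (hy : IsSubgradient μ f y gy) :
    f y + ⟪gy, x - y⟫ + μ/2 * ‖x - y‖^2 + 1/(2*(L-μ)) * ‖gx - gy - μ•(x-y)‖^2 ≤ f x := by
  have hLμ : L - μ ≠ 0 := by linarith
  obtain ⟨t, htdef⟩ : ∃ t : ℝ, t = (L-μ)⁻¹ := ⟨_, rfl⟩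
  have ht : t * (L-μ) = 1 := by rw [htdef]; exact inv_mul_cancel₀ hLμ
  set w : H := gx - gy - μ•(x-y) with hwdef
  set z : H := x - t•w with hzdef
  have hd := descent_lemma hup (fun y' => (hx y' : _)) z
  have hs := hy z
  have hzx : z - x = -(t•w) := by rw [hzdef]; abel
  have hzy : z - y = (x - y) - t•w := by rw [hzdef]; abel
  rw [hzx] at hd
  rw [hzy] at hs
  have e1 : ⟪gx, -(t•w)⟫ = -(t*⟪gx,w⟫) := by rw [inner_neg_right, real_inner_smul_right]
  have e2 : ‖-(t•w)‖^2 = t^2*‖w‖^2 := by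
    rw [norm_neg, norm_smul, mul_pow, Real.norm_eq_abs, sq_abs]
  have e3 : ⟪gy, (x-y) - t•w⟫ = ⟪gy, x-y⟫ - t*⟪gy,w⟫ := by
    rw [inner_sub_right, real_inner_smul_right]
  have e4 : ‖(x-y) - t•w‖^2 = ‖x-y‖^2 - 2*(t*⟪x-y,w⟫) + t^2*‖w‖^2 := by
    rw [norm_sub_sq_real, real_inner_smul_right, norm_smul, mul_pow, Real.norm_eq_abs, sq_abs]
  rw [e1, e2] at hd
  rw [e3, e4] at hs
  have e5 : ‖w‖^2 = ⟪gx,w⟫ - ⟪gy,w⟫ - μ*⟪x-y,w⟫ := by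
    nth_rewrite 1 [← real_inner_self_eq_norm_sq]
    rw [hwdef, inner_sub_left, inner_sub_left, real_inner_smul_left]
  have hbr : -(t*⟪gy,w⟫) - μ*(t*⟪x-y,w⟫) + μ/2*(t^2*‖w‖^2) + t*⟪gx,w⟫ - L/2*(t^2*‖w‖^2)
      = 1/(2*(L-μ)) * ‖w‖^2 := by
    rw [e5]
    have h2L : (1:ℝ)/(2*(L-μ)) = t/2 := by
      rw [htdef]; field_simp
    rw [h2L]
    linear_combination (-(t*(⟪gx,w⟫ - ⟪gy,w⟫ - μ*⟪x-y,w⟫))/2) * ht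
  nlinarith [hd, hs, hbr]

lemma norm_sub_smul_sq' (b : ℝ) (v w : H) :
    ‖v - b•w‖^2 = ‖v‖^2 - 2*(b*⟪v,w⟫) + b^2*‖w‖^2 := by
  rw [norm_sub_sq_real, real_inner_smul_right, norm_smul, mul_pow, Real.norm_eq_abs, sq_abs]

lemma norm_smul_sub_sub_sq (a b c : ℝ) (u p q : H) :
    ‖a•u - b•p - c•q‖^2 = a^2*‖u‖^2 + b^2*‖p‖^2 + c^2*‖q‖^2
      - 2*(a*b*⟪u,p⟫) - 2*(a*c*⟪u,q⟫) + 2*(b*c*⟪p,q⟫) := by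
  have h : a•u - b•p - c•q = a•u - (b•p + c•q) := by abel
  rw [h, norm_sub_sq_real, norm_add_sq_real]
  simp only [inner_add_right, real_inner_smul_left, real_inner_smul_right, norm_smul,
    Real.norm_eq_abs, mul_pow, sq_abs]
  ring

lemma key_step (m n L1 L2 : ℝ) (hm : 0 ≤ m) (hm0 : m = 0 → n = 0)
    (hL2 : 0 < L2) (hA : m < L1) (hB : n < L2)
    (hT : 0 ≤ n*(L1*L2 + 2*m*L1 - 3*m*L2) + m*(L1-L2)*(L2-n))
    (u p q : H) :
    (L2-m)/(2*L2*(L1-m))*‖p‖^2 + (L1*L2 + m*L1 - 2*m*L2)/(2*L2^2*(L1-m))*‖q‖^2 ≤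
      (m/2*‖u‖^2 + 1/(2*(L1-m))*‖p - m•u‖^2)
      + (n/2*‖u‖^2 + 1/(2*(L2-n))*‖q - n•u‖^2)
      + (m*(L1-L2)/(L2*(L1-m))) *
        ((n*‖u‖^2 + (1/(2*(L2-n))*‖q - n•u‖^2 + 1/(2*(L2-n))*‖q - n•u‖^2)) - ⟪q,u⟫) := by
  have hApos : 0 < L1 - m := by linarith
  have hBpos : 0 < L2 - n := by linarith
  rcases eq_or_lt_of_le hm with hm' | hm'
  · have hn0 : n = 0 := hm0 hm'.symm
    rw [← hm', hn0]
    rw [norm_sub_smul_sq', norm_sub_smul_sq']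
    rw [← hm'] at hApos
    apply le_of_eq
    have hL1 : L1 ≠ 0 := by linarith
    field_simp [hL2.ne']
    ring
  · set T : ℝ := n*(L1*L2 + 2*m*L1 - 3*m*L2) + m*(L1-L2)*(L2-n) with hTdef
    set U : ℝ := T + m*L2*(L2-n) with hUdef
    have hU : 0 < U := by
      have : 0 < m*L2*(L2-n) := by positivity
      rw [hUdef]; linarith
    have h1 : (0:ℝ) ≤ ‖(L2*U)•u - (m*L2*(L2-n))•p - T•q‖^2 := by positivity
    have h2' : (0:ℝ) ≤ m*T*L2*(L2-n) :=
      mul_nonneg (mul_nonneg (mul_nonneg hm hT) hL2.le) hBpos.le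
    have h2 : (0:ℝ) ≤ m*T*L2*(L2-n)*‖p-q‖^2 := mul_nonneg h2' (by positivity)
    have hD : (0:ℝ) < 2*L2^2*(L1-m)*(L2-n)*U := by positivity
    rw [← sub_nonneg]
    have key : ((m/2*‖u‖^2 + 1/(2*(L1-m))*‖p - m•u‖^2)
      + (n/2*‖u‖^2 + 1/(2*(L2-n))*‖q - n•u‖^2)
      + (m*(L1-L2)/(L2*(L1-m))) *
        ((n*‖u‖^2 + (1/(2*(L2-n))*‖q - n•u‖^2 + 1/(2*(L2-n))*‖q - n•u‖^2)) - ⟪q,u⟫))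
      - ((L2-m)/(2*L2*(L1-m))*‖p‖^2 + (L1*L2 + m*L1 - 2*m*L2)/(2*L2^2*(L1-m))*‖q‖^2)
      = (‖(L2*U)•u - (m*L2*(L2-n))•p - T•q‖^2 + m*T*L2*(L2-n)*‖p-q‖^2)
          / (2*L2^2*(L1-m)*(L2-n)*U) := by
      rw [norm_smul_sub_sub_sq, norm_sub_smul_sq', norm_sub_smul_sq', norm_sub_sq_real p q,
        real_inner_comm p u, real_inner_comm q u]
      field_simp
      rw [hUdef, hTdef]
      ring
    rw [key]
    positivity

/-- DCA sublinear rate with optimal value, regime p1. -/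
theorem dca_rate_p1_opt
    (mu1 mu2 L1 L2 : ℝ)
    (h1 : L2 ≤ L1) (h2 : mu1 < L2) (h3 : 0 ≤ mu1) (h4 : mu2 < L2) (h5 : mu2 < L1)
    (hreg : 0 ≤ mu2 ∨
      (-mu2 < mu1 ∧ 0 < -mu2 ∧
        1 / mu1 + 1 / mu2 + 1 / L2 ≤ (1 / L1) * (2 + L2 / mu2)))
    (f1 f2 : H → ℝ)
    (h1lo : HasLowerCurvature mu1 f1) (h1up : HasUpperCurvature L1 f1)
    (h2lo : HasLowerCurvature mu2 f2) (h2up : HasUpperCurvature L2 f2)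
    (hbdd : BddBelow (Set.range fun z : H => f1 z - f2 z))
    (N : ℕ) (hN : 1 ≤ N) (x g1 g2 : ℕ → H)
    (hg1 : ∀ k ≤ N, IsSubgradient mu1 f1 (x k) (g1 k))
    (hg2 : ∀ k ≤ N, IsSubgradient mu2 f2 (x k) (g2 k))
    (hdca : ∀ k < N, g1 (k + 1) = g2 k) :
    ((1 : ℝ) / 2) * ((Finset.range (N + 1)).inf' (Finset.nonempty_range_iff.mpr (Nat.succ_ne_zero N))
        fun k => ‖g1 k - g2 k‖ ^ 2) ≤
      ((f1 (x 0) - f2 (x 0)) - ⨅ z : H, (f1 z - f2 z)) /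
        (((L2 - mu1) / (L2 * (L1 - mu1)) +
          (1 / L2) * (1 + mu1 * (L1 - L2) / (L2 * (L1 - mu1)))) * N + 1 / (L1 - mu2)) := by
  haveI : Nonempty H := ⟨0⟩
  have hL2pos : 0 < L2 := lt_of_le_of_lt h3 h2
  have hL1pos : 0 < L1 := lt_of_lt_of_le hL2pos h1
  have hmuL1 : mu1 < L1 := lt_of_lt_of_le h2 h1
  have hApos : 0 < L1 - mu1 := by linarith
  have hL1mu2 : 0 < L1 - mu2 := by linarith
  -- obtain effective lower curvature parameter n for f2
  obtain ⟨n, hnsub, hnB, hT, hn0⟩ :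
      ∃ n : ℝ, (∀ k ≤ N, IsSubgradient n f2 (x k) (g2 k)) ∧ n < L2 ∧
        0 ≤ n*(L1*L2 + 2*mu1*L1 - 3*mu1*L2) + mu1*(L1-L2)*(L2-n) ∧ (mu1 = 0 → n = 0) := by
    rcases hreg with hpos | ⟨hr1, hr2, hr3⟩
    · refine ⟨0, ?_, hL2pos, ?_, fun _ => rfl⟩
      · intro k hk y
        have hz := hg2 k hk y
        have h0 : 0 ≤ mu2/2 * ‖y - x k‖^2 := by positivity
        have : (0:ℝ)/2 * ‖y - x k‖^2 = 0 := by ring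
        rw [ge_iff_le, this]
        linarith [hz]
      · nlinarith [mul_nonneg (mul_nonneg h3 (by linarith : (0:ℝ) ≤ L1 - L2)) hL2pos.le]
    · have hmu1pos : 0 < mu1 := by linarith
      have hmu2neg : mu2 < 0 := by linarith
      refine ⟨mu2, fun k hk => hg2 k hk, h4, ?_, fun h0 => absurd h0 (by linarith)⟩
      have hid : (1/mu1 + 1/mu2 + 1/L2 - (1/L1)*(2 + L2/mu2)) * (mu1*mu2*L1*L2)
          = mu2*(L1*L2 + 2*mu1*L1 - 3*mu1*L2) + mu1*(L1-L2)*(L2-mu2) := by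
        field_simp [hmu2neg.ne, hmu1pos.ne', hL1pos.ne', hL2pos.ne']
        ring
      have hprod : mu1*mu2*L1*L2 < 0 := by
        have hp : 0 < mu1*L1*L2 := by positivity
        nlinarith
      have hfac : 1/mu1 + 1/mu2 + 1/L2 - (1/L1)*(2 + L2/mu2) ≤ 0 := by linarith
      calc (0:ℝ) ≤ (-(1/mu1 + 1/mu2 + 1/L2 - (1/L1)*(2 + L2/mu2))) * (-(mu1*mu2*L1*L2)) :=
            mul_nonneg (by linarith) (by linarith)
        _ = (1/mu1 + 1/mu2 + 1/L2 - (1/L1)*(2 + L2/mu2)) * (mu1*mu2*L1*L2) := by ring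
        _ = _ := hid
  have hBpos : 0 < L2 - n := by linarith
  -- constants
  obtain ⟨cp, hcp⟩ : ∃ cp : ℝ, cp = (L2 - mu1)/(2*L2*(L1-mu1)) := ⟨_, rfl⟩
  obtain ⟨cq, hcq⟩ : ∃ cq : ℝ, cq = (L1*L2 + mu1*L1 - 2*mu1*L2)/(2*L2^2*(L1-mu1)) := ⟨_, rfl⟩
  have hcpnn : 0 ≤ cp := by
    rw [hcp]
    apply div_nonneg (by linarith)
    nlinarith [mul_pos hL2pos hApos]
  have hcqnn : 0 ≤ cq := by
    rw [hcq]
    apply div_nonneg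
    · nlinarith [mul_pos hL2pos hApos, mul_nonneg h3 (by linarith : (0:ℝ) ≤ L1 - L2)]
    · nlinarith [mul_pos (mul_pos hL2pos hL2pos) hApos]
  set ms := (Finset.range (N + 1)).inf' (Finset.nonempty_range_iff.mpr (Nat.succ_ne_zero N))
      fun k => ‖g1 k - g2 k‖ ^ 2 with hms
  have hmge : ∀ k, k ≤ N → ms ≤ ‖g1 k - g2 k‖^2 := by
    intro k hk
    rw [hms]
    exact Finset.inf'_le _ (Finset.mem_range.mpr (by omega))
  -- per-step decrease
  have hstep : ∀ k, k < N → cp*ms + cq*ms ≤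
      (f1 (x k) - f2 (x k)) - (f1 (x (k+1)) - f2 (x (k+1))) := by
    intro k hk
    have hk1 : k + 1 ≤ N := hk
    have hkN : k ≤ N := le_of_lt hk
    have hd := hdca k hk
    have hF1 := interp_lemma hmuL1 h1up (hg1 k hkN) (hg1 (k+1) hk1)
    have hF2 := interp_lemma hnB h2up (hnsub (k+1) hk1) (hnsub k hkN)
    have hF3 := interp_lemma hnB h2up (hnsub k hkN) (hnsub (k+1) hk1)
    rw [hd] at hF1
    -- rewrite hF2
    have hq1 : g2 (k+1) - g2 k - n • (x (k+1) - x k)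
        = -(g1 (k+1) - g2 (k+1) - n • (x k - x (k+1))) := by
      rw [hd]; module
    rw [hq1, norm_neg] at hF2
    have hu1 : x (k+1) - x k = -(x k - x (k+1)) := by abel
    rw [hu1, inner_neg_right, norm_neg] at hF2
    -- rewrite hF3
    rw [← hd] at hF3
    -- pair inequality
    have hq3 : ⟪g1 (k+1) - g2 (k+1), x k - x (k+1)⟫
        = ⟪g2 k, x k - x (k+1)⟫ - ⟪g2 (k+1), x k - x (k+1)⟫ := by
      rw [hd, inner_sub_left]
    have hpair : ((n*‖x k - x (k+1)‖^2 +
        (1/(2*(L2-n))*‖g1 (k+1) - g2 (k+1) - n•(x k - x (k+1))‖^2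
          + 1/(2*(L2-n))*‖g1 (k+1) - g2 (k+1) - n•(x k - x (k+1))‖^2))
        - ⟪g1 (k+1) - g2 (k+1), x k - x (k+1)⟫) ≤ 0 := by
      rw [hq3]
      linarith [hF2, hF3]
    have hrho : 0 ≤ mu1*(L1-L2)/(L2*(L1-mu1)) := by
      apply div_nonneg (mul_nonneg h3 (by linarith))
      nlinarith [mul_pos hL2pos hApos]
    have hmul := mul_le_mul_of_nonneg_left hpair hrho
    rw [mul_zero] at hmul
    have hkey := key_step mu1 n L1 L2 h3 hn0 hL2pos hmuL1 hnB hT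
      (x k - x (k+1)) (g1 k - g2 k) (g1 (k+1) - g2 (k+1))
    have hcpms := mul_le_mul_of_nonneg_left (hmge k hkN) hcpnn
    have hcqms := mul_le_mul_of_nonneg_left (hmge (k+1) hk1) hcqnn
    rw [hcp] at hcpms
    rw [hcq] at hcqms
    rw [hcp, hcq]
    linarith [hF1, hF2, hkey, hmul, hcpms, hcqms]
  -- telescoping
  have htel : (f1 (x 0) - f2 (x 0)) - (f1 (x N) - f2 (x N))
      = ∑ k ∈ Finset.range N, ((f1 (x k) - f2 (x k)) - (f1 (x (k+1)) - f2 (x (k+1)))) :=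
    (Finset.sum_range_sub' (fun k => f1 (x k) - f2 (x k)) N).symm
  have hsum : (N:ℝ) * ((cp + cq) * ms) ≤ (f1 (x 0) - f2 (x 0)) - (f1 (x N) - f2 (x N)) := by
    rw [htel]
    have hb := Finset.card_nsmul_le_sum (Finset.range N)
      (fun k => (f1 (x k) - f2 (x k)) - (f1 (x (k+1)) - f2 (x (k+1)))) ((cp+cq)*ms)
      (fun k hk => by
        have := hstep k (Finset.mem_range.mp hk)
        linarith)
    simpa [nsmul_eq_mul] using hb
  -- last iterate bound
  have hlast : (⨅ z : H, (f1 z - f2 z))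
      ≤ (f1 (x N) - f2 (x N)) - 1/(2*(L1-mu2)) * ‖g1 N - g2 N‖^2 := by
    obtain ⟨s0, hs0def⟩ : ∃ s0 : ℝ, s0 = (L1-mu2)⁻¹ := ⟨_, rfl⟩
    have hs0 : s0 * (L1-mu2) = 1 := by rw [hs0def]; exact inv_mul_cancel₀ hL1mu2.ne'
    set d : H := g1 N - g2 N with hddef
    set z0 : H := x N - s0 • d with hz0def
    have hinf := ciInf_le hbdd z0
    have hdesc := descent_lemma h1up (fun y => (hg1 N le_rfl y : _)) z0
    have hsub2 := hg2 N le_rfl z0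
    have hz0x : z0 - x N = -(s0 • d) := by rw [hz0def]; abel
    rw [hz0x] at hdesc
    rw [hz0x] at hsub2
    have e1 : ∀ g : H, ⟪g, -(s0 • d)⟫ = -(s0 * ⟪g, d⟫) := by
      intro g; rw [inner_neg_right, real_inner_smul_right]
    have e2 : ‖-(s0 • d)‖^2 = s0^2 * ‖d‖^2 := by
      rw [norm_neg, norm_smul, mul_pow, Real.norm_eq_abs, sq_abs]
    rw [e1, e2] at hdesc
    rw [e1, e2] at hsub2
    have e3 : ⟪g1 N, d⟫ - ⟪g2 N, d⟫ = ‖d‖^2 := by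
      rw [← inner_sub_left, hddef, real_inner_self_eq_norm_sq]
    have e4 : L1/2*(s0^2*‖d‖^2) - mu2/2*(s0^2*‖d‖^2) - s0*‖d‖^2 + s0/2*‖d‖^2
        = (s0*‖d‖^2/2) * (s0*(L1-mu2)) - s0*‖d‖^2 + s0/2*‖d‖^2 := by ring
    have e5 : (s0*‖d‖^2/2) * (s0*(L1-mu2)) - s0*‖d‖^2 + s0/2*‖d‖^2 = 0 := by
      rw [hs0]; ring
    have e6 : 1/(2*(L1-mu2)) = s0/2 := by rw [hs0def]; field_simp
    rw [e6]
    nlinarith [hinf, hdesc, hsub2, e3, e4, e5]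
  have hlast2 : 1/(2*(L1-mu2)) * ms
      ≤ (f1 (x N) - f2 (x N)) - (⨅ z : H, (f1 z - f2 z)) := by
    have h1' := hmge N le_rfl
    have h2' : 1/(2*(L1-mu2)) * ms ≤ 1/(2*(L1-mu2)) * ‖g1 N - g2 N‖^2 :=
      mul_le_mul_of_nonneg_left h1' (by positivity)
    linarith [hlast]
  -- final assembly
  have hpsum : (L2 - mu1) / (L2 * (L1 - mu1)) +
      (1 / L2) * (1 + mu1 * (L1 - L2) / (L2 * (L1 - mu1))) = 2*(cp+cq) := by
    rw [hcp, hcq]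
    field_simp
    ring
  have hDpos : 0 < ((L2 - mu1) / (L2 * (L1 - mu1)) +
      (1 / L2) * (1 + mu1 * (L1 - L2) / (L2 * (L1 - mu1)))) * N + 1 / (L1 - mu2) := by
    rw [hpsum]
    have hNn : (0:ℝ) ≤ (N:ℝ) := Nat.cast_nonneg N
    have : 0 < 1/(L1-mu2) := by positivity
    nlinarith [mul_nonneg (by linarith : (0:ℝ) ≤ 2*(cp+cq)) hNn]
  rw [le_div_iff₀ hDpos]
  have hexp : 1/2 * ms * (((L2 - mu1) / (L2 * (L1 - mu1)) +
      (1 / L2) * (1 + mu1 * (L1 - L2) / (L2 * (L1 - mu1)))) * N + 1 / (L1 - mu2))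
      = (N:ℝ) * ((cp + cq) * ms) + 1/(2*(L1-mu2)) * ms := by
    rw [hpsum]
    have : (1:ℝ)/(2*(L1-mu2)) = (1/(L1-mu2))/2 := by
      field_simp
    rw [this]
    ring
  rw [hexp]
  linarith [hsum, hlast2]
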